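/- arXiv:1112.5740 — 2 statements merged into one kernel-verified Lean document; each statement's English description precedes it below -/
import Mathlib

section
/- Let J be a Hausdorff topological space, let W₁, W₂ ⊆ J be open subsets with W₁ connected, and let φ : J → M be a continuous map such that the restrictions φ|_{W₁} and φ|_{W₂} are injective with φ(W₁) = φ(W₂) = U for some set U, and such that φ restricted to each Wᵢ is a homeomorphism onto U. If W₁ ∩ W₂ ≠ ∅, then W₁ = W₂. -/
/-- If `J` is Hausdorff, `W₁, W₂ ⊆ J` are open, `W₁` is connected, and a continuous map
`φ : J → M` restricts to injections of `W₁` and `W₂` onto a common image `U`, being a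
homeomorphism of each `Wᵢ` onto `U`, then `W₁ ∩ W₂ ≠ ∅` implies `W₁ = W₂`. -/
theorem stmt_2 {J M : Type*} [TopologicalSpace J] [TopologicalSpace M] [T2Space J]
    (W₁ W₂ : Set J) (hW₁ : IsOpen W₁) (hW₂ : IsOpen W₂) (hconn : IsConnected W₁)
    (φ : J → M) (hφ : Continuous φ)
    (hinj₁ : Set.InjOn φ W₁) (hinj₂ : Set.InjOn φ W₂)
    (U : Set M) (him₁ : φ '' W₁ = U) (him₂ : φ '' W₂ = U)
    (hhomeo₁ : ∃ h : W₁ ≃ₜ U, ∀ x : W₁, (h x : M) = φ x)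
    (hhomeo₂ : ∃ h : W₂ ≃ₜ U, ∀ x : W₂, (h x : M) = φ x)
    (hne : (W₁ ∩ W₂).Nonempty) : W₁ = W₂ := by
  obtain ⟨h₁, hh₁⟩ := hhomeo₁
  obtain ⟨h₂, hh₂⟩ := hhomeo₂
  -- the map f : W₁ → J, x ↦ the point of W₂ with the same φ-value
  set f : W₁ → J := fun x => ((h₂.symm (h₁ x) : W₂) : J) with hf
  have hfc : Continuous f :=
    continuous_subtype_val.comp ((h₂.symm.continuous).comp h₁.continuous)
  have hφf : ∀ x : W₁, φ (f x) = φ x := by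
    intro x
    have := hh₂ (h₂.symm (h₁ x))
    rw [h₂.apply_symm_apply] at this
    rw [hf]
    simp only
    rw [← this, hh₁]
  have key : ∀ x : W₁, (x : J) ∈ W₂ ↔ f x = x := by
    intro x
    constructor
    · intro hx
      exact hinj₂ (h₂.symm (h₁ x)).2 hx (hφf x)
    · intro hx
      rw [← hx]
      exact (h₂.symm (h₁ x)).2
  -- the set of points of W₁ lying in W₂ is clopen in W₁
  have hclosed : IsClosed {x : W₁ | f x = (x : J)} :=
    isClosed_eq hfc continuous_subtype_val
  have hopen : IsOpen {x : W₁ | (x : J) ∈ W₂} :=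
    hW₂.preimage continuous_subtype_val
  have hset : {x : W₁ | (x : J) ∈ W₂} = {x : W₁ | f x = (x : J)} := by
    ext x; exact key x
  have hclopen : IsClopen {x : W₁ | (x : J) ∈ W₂} := ⟨hset ▸ hclosed, hopen⟩
  haveI : ConnectedSpace W₁ := Subtype.connectedSpace hconn
  have hne' : {x : W₁ | (x : J) ∈ W₂}.Nonempty := by
    obtain ⟨x, hx₁, hx₂⟩ := hne
    exact ⟨⟨x, hx₁⟩, hx₂⟩
  have huniv := (isClopen_iff.mp hclopen).resolve_left (by
    intro h; rw [h] at hne'; exact Set.not_nonempty_empty hne')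
  have hsub : W₁ ⊆ W₂ := by
    intro x hx
    have : (⟨x, hx⟩ : W₁) ∈ ({x : W₁ | (x : J) ∈ W₂}) := huniv ▸ Set.mem_univ _
    exact this
  -- reverse inclusion via equal images and injectivity on W₂
  apply Set.Subset.antisymm hsub
  intro x hx
  have : φ x ∈ U := him₂ ▸ Set.mem_image_of_mem φ hx
  rw [← him₁] at this
  obtain ⟨y, hy, hyx⟩ := this
  have := hinj₂ (hsub hy) hx hyx
  exact this ▸ hy
end

section
/- Let {N_n}_{n∈ℕ} be a decreasing family of open neighbourhoods of a compact set K in a topological space J, with Cl(N_{n+1}) ⊆ N_n for all n, each Cl(N_n) compact, and ⋂_n N_n = K. Let φ : J → M be a continuous map to a metric space such that φ restricted to K is injective and φ is injective on a neighbourhood of each point of K. Then φ is injective on N_n for some n. -/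
/-- Compactness argument of Lemma 3.14: given a decreasing family of open
neighbourhoods `N n` of a compact set `K` with `Cl (N (n+1)) ⊆ N n`, compact closures,
and `⋂ N n = K`, a continuous map `φ` into a metric space which is injective on `K`
and locally injective at each point of `K` is injective on some `N n`. -/
theorem stmt_16 {J M : Type*} [TopologicalSpace J] [MetricSpace M]
    (K : Set J) (hK : IsCompact K) (N : ℕ → Set J)
    (hopen : ∀ n, IsOpen (N n)) (hKN : ∀ n, K ⊆ N n)
    (hdec : ∀ n, closure (N (n + 1)) ⊆ N n) (hcpt : ∀ n, IsCompact (closure (N n)))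
    (hinter : ⋂ n, N n = K)
    (φ : J → M) (hφ : Continuous φ) (hinjK : Set.InjOn φ K)
    (hloc : ∀ k ∈ K, ∃ U : Set J, IsOpen U ∧ k ∈ U ∧ Set.InjOn φ U) :
    ∃ n, Set.InjOn φ (N n) := by
  classical
  by_contra h
  push_neg at h
  choose U hUopen hUmem hUinj using hloc
  set W : Set (J × J) := ⋃ (k : J) (hk : k ∈ K), (U k hk) ×ˢ (U k hk) with hW
  have hWopen : IsOpen W :=
    isOpen_iUnion fun k => isOpen_iUnion fun hk => (hUopen k hk).prod (hUopen k hk)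
  set C : Set (J × J) := {p | φ p.1 = φ p.2} ∩ Wᶜ with hC
  have hCclosed : IsClosed C :=
    (isClosed_eq (hφ.comp continuous_fst) (hφ.comp continuous_snd)).inter
      hWopen.isClosed_compl
  set F : ℕ → Set (J × J) := fun n => (closure (N n) ×ˢ closure (N n)) ∩ C with hF
  have hFclosed : ∀ n, IsClosed (F n) := fun n =>
    (isClosed_closure.prod isClosed_closure).inter hCclosed
  have hFsub : ∀ n, F (n + 1) ⊆ F n := by
    intro n x hx
    exact ⟨⟨subset_closure (hdec n (hx.1.1)), subset_closure (hdec n (hx.1.2))⟩, hx.2⟩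
  have hFne : ∀ n, (F n).Nonempty := by
    intro n
    have := h n
    rw [Set.InjOn] at this
    push_neg at this
    obtain ⟨p, hp, q, hq, hpq, hne⟩ := this
    refine ⟨(p, q), ⟨⟨subset_closure hp, subset_closure hq⟩, hpq, ?_⟩⟩
    intro hmem
    simp only [hW, Set.mem_iUnion, Set.mem_prod] at hmem
    obtain ⟨k, hk, hp', hq'⟩ := hmem
    exact hne (hUinj k hk hp' hq' hpq)
  have hF0 : IsCompact (F 0) :=
    ((hcpt 0).prod (hcpt 0)).inter_right hCclosed
  obtain ⟨⟨p, q⟩, hpq⟩ :=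
    IsCompact.nonempty_iInter_of_sequence_nonempty_isCompact_isClosed F hFsub hFne hF0 hFclosed
  have hmem : ∀ n, (p, q) ∈ F n := fun n => Set.mem_iInter.mp hpq n
  have hpK : p ∈ K := by
    rw [← hinter]
    exact Set.mem_iInter.mpr fun n => hdec n (hmem (n + 1)).1.1
  have hqK : q ∈ K := by
    rw [← hinter]
    exact Set.mem_iInter.mpr fun n => hdec n (hmem (n + 1)).1.2
  have heq : p = q := hinjK hpK hqK (hmem 0).2.1
  apply (hmem 0).2.2
  subst heq
  exact Set.mem_iUnion.mpr ⟨p, Set.mem_iUnion.mpr ⟨hpK, hUmem p hpK, hUmem p hpK⟩⟩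
end
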